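/- For positive definite density matrices ρ, σ, the quantity Δ_max(ρ,σ) := inf over reverse tests of ½‖p−q‖₁ satisfies 1 − F_min(ρ,σ) ≤ Δ_max(ρ,σ) ≤ √(1 − F_min(ρ,σ)²), where F_min(ρ,σ) = tr(ρ#σ). -/

import Mathlib

open Matrix BigOperators
open scoped ComplexOrder Classical

noncomputable def msqrt {n : Type*} [Fintype n] [DecidableEq n]
    (A : Matrix n n ℂ) : Matrix n n ℂ :=
  if h : A.PosSemidef then
    (h.1.eigenvectorUnitary : Matrix n n ℂ) *
      diagonal (RCLike.ofReal ∘ Real.sqrt ∘ h.1.eigenvalues) *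
      (star h.1.eigenvectorUnitary : Matrix n n ℂ)
  else 0

noncomputable def gm {n : Type*} [Fintype n] [DecidableEq n]
    (A B : Matrix n n ℂ) : Matrix n n ℂ :=
  msqrt A * msqrt ((msqrt A)⁻¹ * B * (msqrt A)⁻¹) * msqrt A

def IsDensity {n : Type*} [Fintype n] (ρ : Matrix n n ℂ) : Prop :=
  ρ.PosSemidef ∧ ρ.trace = 1

structure IsReverseTest {d m : ℕ} (ρ σ : Matrix (Fin d) (Fin d) ℂ)
    (R : Fin m → Matrix (Fin d) (Fin d) ℂ) (p q : Fin m → ℝ) : Prop where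
  states : ∀ x, IsDensity (R x)
  p_nonneg : ∀ x, 0 ≤ p x
  q_nonneg : ∀ x, 0 ≤ q x
  p_sum : ∑ x, p x = 1
  q_sum : ∑ x, q x = 1
  rho_eq : ∑ x, (p x : ℂ) • R x = ρ
  sigma_eq : ∑ x, (q x : ℂ) • R x = σ

noncomputable def Fmin {d : ℕ} (ρ σ : Matrix (Fin d) (Fin d) ℂ) : ℝ :=
  sSup {r : ℝ | ∃ (m : ℕ) (R : Fin m → Matrix (Fin d) (Fin d) ℂ) (p q : Fin m → ℝ),
    IsReverseTest ρ σ R p q ∧ r = ∑ x, Real.sqrt (p x * q x)}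

noncomputable def Dmax {d : ℕ} (ρ σ : Matrix (Fin d) (Fin d) ℂ) : ℝ :=
  sInf {r : ℝ | ∃ (m : ℕ) (R : Fin m → Matrix (Fin d) (Fin d) ℂ) (p q : Fin m → ℝ),
    IsReverseTest ρ σ R p q ∧ r = (∑ x, |p x - q x|) / 2}

noncomputable def choiMatrix {d e : ℕ}
    (Λ : Matrix (Fin d) (Fin d) ℂ →ₗ[ℂ] Matrix (Fin e) (Fin e) ℂ) :
    Matrix (Fin d × Fin e) (Fin d × Fin e) ℂ :=
  Matrix.of fun pr qr => Λ (Matrix.single pr.1 qr.1 1) pr.2 qr.2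

def IsCPTP {d e : ℕ}
    (Λ : Matrix (Fin d) (Fin d) ℂ →ₗ[ℂ] Matrix (Fin e) (Fin e) ℂ) : Prop :=
  (choiMatrix Λ).PosSemidef ∧ ∀ A, (Λ A).trace = A.trace

noncomputable def mcfc {n : Type*} [Fintype n] [DecidableEq n]
    (f : ℝ → ℝ) (A : Matrix n n ℂ) : Matrix n n ℂ :=
  if h : A.IsHermitian then h.cfc f else 0

def IsOperatorMonotoneOnNonneg (f : ℝ → ℝ) : Prop :=
  ∀ (d : ℕ) (A B : Matrix (Fin d) (Fin d) ℂ), A.PosSemidef → B.PosSemidef →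
    (B - A).PosSemidef → (mcfc f B - mcfc f A).PosSemidef

noncomputable def traceNorm {n : Type*} [Fintype n] [DecidableEq n]
    (A : Matrix n n ℂ) : ℝ :=
  ((msqrt (Aᴴ * A)).trace).re
section Helpers
variable {n : Type*} [Fintype n] [DecidableEq n]

lemma msqrt_of_psd {A : Matrix n n ℂ} (h : A.PosSemidef) : msqrt A =
    (h.1.eigenvectorUnitary : Matrix n n ℂ) *
      diagonal (RCLike.ofReal ∘ Real.sqrt ∘ h.1.eigenvalues) *
      (star h.1.eigenvectorUnitary : Matrix n n ℂ) := dif_pos h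

lemma msqrt_posSemidef {A : Matrix n n ℂ} (h : A.PosSemidef) : (msqrt A).PosSemidef := by
  rw [msqrt_of_psd h]
  have hd : (diagonal (RCLike.ofReal ∘ Real.sqrt ∘ h.1.eigenvalues) : Matrix n n ℂ).PosSemidef := by
    refine posSemidef_diagonal_iff.mpr fun i => ?_
    simp only [Function.comp_apply]
    exact Complex.zero_le_real.mpr (Real.sqrt_nonneg _)
  have := hd.mul_mul_conjTranspose_same (h.1.eigenvectorUnitary : Matrix n n ℂ)
  rwa [← Matrix.star_eq_conjTranspose] at this

lemma msqrt_isHermitian {A : Matrix n n ℂ} (h : A.PosSemidef) : (msqrt A).IsHermitian :=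
  (msqrt_posSemidef h).1

lemma msqrt_mul_self {A : Matrix n n ℂ} (h : A.PosSemidef) : msqrt A * msqrt A = A := by
  rw [msqrt_of_psd h]
  conv_rhs => rw [h.1.spectral_theorem, Unitary.conjStarAlgAut_apply]
  have hU : (star (h.1.eigenvectorUnitary : Matrix n n ℂ)) * (h.1.eigenvectorUnitary : Matrix n n ℂ) = 1 :=
    Unitary.coe_star_mul_self _
  rw [show ∀ X Y Z : Matrix n n ℂ, X * Y * Z * (X * Y * Z) = X * (Y * (Z * X) * Y) * Z by
    intros; simp only [Matrix.mul_assoc], hU, Matrix.mul_one, diagonal_mul_diagonal]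
  congr 3
  funext i
  simp only [Function.comp_apply]
  rw [← RCLike.ofReal_mul, Real.mul_self_sqrt (h.eigenvalues_nonneg i)]

lemma psd_posDef_of_det_ne_zero {A : Matrix n n ℂ} (h : A.PosSemidef) (hd : A.det ≠ 0) :
    A.PosDef := by
  set B := msqrt A with hB
  have hBB : B * B = A := msqrt_mul_self h
  have hBH : B.IsHermitian := msqrt_isHermitian h
  have hBd : B.det ≠ 0 := by
    intro h0
    apply hd
    rw [← hBB, Matrix.det_mul, h0, mul_zero]
  haveI : Invertible B := B.invertibleOfIsUnitDet (Ne.isUnit hBd)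
  refine PosDef.of_dotProduct_mulVec_pos h.1 fun x hx => ?_
  have hy : B *ᵥ x ≠ 0 := fun h0 => hx (B.mulVec_injective_of_invertible (h0.trans (B.mulVec_zero).symm))
  have : star x ⬝ᵥ (A *ᵥ x) = star (B *ᵥ x) ⬝ᵥ (B *ᵥ x) := by
    rw [← hBB, star_mulVec, hBH.eq, ← Matrix.mulVec_mulVec, Matrix.dotProduct_mulVec]
  rw [this]
  exact Matrix.dotProduct_star_self_pos_iff.mpr hy

lemma msqrt_posDef {A : Matrix n n ℂ} (h : A.PosDef) : (msqrt A).PosDef := by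
  have hd : A.det ≠ 0 := h.det_pos.ne'
  apply psd_posDef_of_det_ne_zero (msqrt_posSemidef h.posSemidef)
  intro h0
  apply hd
  rw [← msqrt_mul_self h.posSemidef, Matrix.det_mul, h0, mul_zero]

lemma posDef_conj {P B : Matrix n n ℂ} (hP : P.PosDef) (hB : B.IsHermitian)
    (hBd : B.det ≠ 0) : (B * P * B).PosDef := by
  haveI : Invertible B := B.invertibleOfIsUnitDet (Ne.isUnit hBd)
  refine PosDef.of_dotProduct_mulVec_pos (by rw [Matrix.IsHermitian, Matrix.conjTranspose_mul, Matrix.conjTranspose_mul, hB.eq, hP.1.eq, Matrix.mul_assoc]) fun x hx => ?_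
  have hy : B *ᵥ x ≠ 0 := fun h0 => hx (B.mulVec_injective_of_invertible (h0.trans (B.mulVec_zero).symm))
  have : star x ⬝ᵥ ((B * P * B) *ᵥ x) = star (B *ᵥ x) ⬝ᵥ (P *ᵥ (B *ᵥ x)) := by
    rw [star_mulVec, hB.eq, ← Matrix.mulVec_mulVec, ← Matrix.mulVec_mulVec, Matrix.dotProduct_mulVec]
  rw [this]
  exact hP.dotProduct_mulVec_pos hy

lemma psd_diag_nonneg {Q : Matrix n n ℂ} (h : Q.PosSemidef) (i : n) : 0 ≤ Q i i := by
  have := h.dotProduct_mulVec_nonneg (Pi.single i 1)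
  simpa [dotProduct, Pi.single_apply] using this

lemma psd_trace_re_nonneg {Q : Matrix n n ℂ} (h : Q.PosSemidef) : 0 ≤ (Q.trace).re := by
  rw [Matrix.trace]
  simp only [Complex.re_sum]
  refine Finset.sum_nonneg fun i _ => ?_
  have := psd_diag_nonneg h i
  rw [Complex.le_def] at this
  exact this.1

end Helpers
section Mono
variable {n : Type*} [Fintype n] [DecidableEq n]

lemma sub_psd_of_sq_sub_psd {M T : Matrix n n ℂ} (hM : M.PosDef) (hT : T.IsHermitian)
    (h : (M * M - T * T).PosSemidef) : (M - T).PosSemidef := by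
  have hD : (M - T).IsHermitian := hM.1.sub hT
  apply hD.posSemidef_iff_eigenvalues_nonneg.mpr
  intro i
  show 0 ≤ hD.eigenvalues i
  by_contra hneg
  push_neg at hneg
  set μ : ℝ := hD.eigenvalues i with hμ
  set v : n → ℂ := ⇑(hD.eigenvectorBasis i) with hv
  have hvec : (M - T) *ᵥ v = (μ : ℂ) • v := by
    have := hD.mulVec_eigenvectorBasis i
    rw [← hv, ← hμ] at this
    rw [this]
    funext j
    simp [Complex.real_smul]
  have hvne : v ≠ 0 := by
    intro h0
    have := hD.eigenvectorBasis.orthonormal.ne_zero i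
    apply this
    ext j
    exact congrFun h0 j
  have hs : 0 < (star v ⬝ᵥ v).re := by
    have := (Matrix.dotProduct_star_self_pos_iff (v := v)).mpr hvne
    rw [Complex.lt_def] at this
    simpa using this.1
  have ha : 0 < (star v ⬝ᵥ (M *ᵥ v)).re := by
    have := hM.re_dotProduct_pos hvne
    simpa using this
  -- key inequality
  have hkey : 0 ≤ (star v ⬝ᵥ ((M * M - T * T) *ᵥ v)).re := by
    have := h.dotProduct_mulVec_nonneg v
    rw [Complex.le_def] at this
    simpa using this.1
  have hsplit : M * M - T * T = M * (M - T) + (M - T) * T := by noncomm_ring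
  have hrow : star v ᵥ* (M - T) = (μ : ℂ) • star v := by
    have h1 : star ((M - T) *ᵥ v) = star v ᵥ* (M - T)ᴴ := Matrix.star_mulVec _ _
    rw [hD.eq] at h1
    rw [← h1, hvec]
    ext j
    simp [Pi.smul_apply, Complex.ext_iff]
  have e1 : star v ⬝ᵥ ((M * (M - T)) *ᵥ v) = (μ : ℂ) * (star v ⬝ᵥ (M *ᵥ v)) := by
    rw [← Matrix.mulVec_mulVec, hvec, Matrix.mulVec_smul, dotProduct_smul]
    simp [smul_eq_mul]
  have e2 : star v ⬝ᵥ (((M - T) * T) *ᵥ v) = (μ : ℂ) * (star v ⬝ᵥ (T *ᵥ v)) := by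
    rw [← Matrix.mulVec_mulVec, Matrix.dotProduct_mulVec, hrow, smul_dotProduct]
    simp [smul_eq_mul, Matrix.dotProduct_mulVec]
  have e3 : star v ⬝ᵥ ((M - T) *ᵥ v) = (μ : ℂ) * (star v ⬝ᵥ v) := by
    rw [hvec, dotProduct_smul]; simp [smul_eq_mul]
  -- t = a - μ s
  have e4 : star v ⬝ᵥ (T *ᵥ v) = star v ⬝ᵥ (M *ᵥ v) - (μ : ℂ) * (star v ⬝ᵥ v) := by
    rw [← e3, Matrix.sub_mulVec, dotProduct_sub]
    ring
  have hre : (star v ⬝ᵥ ((M * M - T * T) *ᵥ v)).re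
      = μ * (2 * (star v ⬝ᵥ (M *ᵥ v)).re - μ * (star v ⬝ᵥ v).re) := by
    rw [hsplit, Matrix.add_mulVec, dotProduct_add, e1, e2, e4]
    have : (μ:ℂ) * (star v ⬝ᵥ (M *ᵥ v)) + (μ:ℂ) * (star v ⬝ᵥ (M *ᵥ v) - (μ:ℂ) * (star v ⬝ᵥ v))
        = (μ:ℂ) * (2 * (star v ⬝ᵥ (M *ᵥ v)) - (μ:ℂ) * (star v ⬝ᵥ v)) := by ring
    rw [this]
    simp only [Complex.mul_re, Complex.ofReal_re, Complex.ofReal_im, Complex.sub_re,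
      Complex.sub_im, Complex.mul_im, Complex.re_ofNat, Complex.im_ofNat]
    ring
  rw [hre] at hkey
  have hpos : 0 < 2 * (star v ⬝ᵥ (M *ᵥ v)).re - μ * (star v ⬝ᵥ v).re := by nlinarith
  have := mul_neg_of_neg_of_pos hneg hpos
  linarith
end Mono
section Classical
variable {m : ℕ} {p q : Fin m → ℝ}

lemma abs_eq_sq_diff (a b : ℝ) (ha : 0 ≤ a) (hb : 0 ≤ b) :
    |a - b| * (a + b) = |a ^ 2 - b ^ 2| := by
  rw [← abs_of_nonneg (by positivity : (0:ℝ) ≤ a + b), ← abs_mul]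
  ring_nf

lemma classical_lower (hp : ∀ x, 0 ≤ p x) (hq : ∀ x, 0 ≤ q x)
    (hp1 : ∑ x, p x = 1) (hq1 : ∑ x, q x = 1) :
    1 - ∑ x, Real.sqrt (p x * q x) ≤ (∑ x, |p x - q x|) / 2 := by
  have key : ∀ x, p x + q x - 2 * Real.sqrt (p x * q x) ≤ |p x - q x| := by
    intro x
    set a := Real.sqrt (p x) with hadef
    set b := Real.sqrt (q x) with hbdef
    have ha : 0 ≤ a := Real.sqrt_nonneg _
    have hb : 0 ≤ b := Real.sqrt_nonneg _
    have hpa : a ^ 2 = p x := Real.sq_sqrt (hp x)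
    have hqb : b ^ 2 = q x := Real.sq_sqrt (hq x)
    have hab : Real.sqrt (p x * q x) = a * b := Real.sqrt_mul (hp x) _
    have h1 : |a - b| ≤ a + b := by
      rw [abs_sub_le_iff]; constructor <;> linarith
    have h2 : (a - b) ^ 2 ≤ |a - b| * (a + b) := by
      rw [← sq_abs]
      have := mul_le_mul_of_nonneg_left h1 (abs_nonneg (a - b))
      nlinarith [abs_nonneg (a-b)]
    have h3 : |a - b| * (a + b) = |p x - q x| := by
      rw [abs_eq_sq_diff a b ha hb, hpa, hqb]
    nlinarith
  have hsum : ∑ x, (p x + q x - 2 * Real.sqrt (p x * q x)) ≤ ∑ x, |p x - q x| :=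
    Finset.sum_le_sum fun x _ => key x
  have hL : ∑ x, (p x + q x - 2 * Real.sqrt (p x * q x))
      = 2 - 2 * ∑ x, Real.sqrt (p x * q x) := by
    rw [Finset.sum_sub_distrib, Finset.sum_add_distrib, hp1, hq1, ← Finset.mul_sum]
    ring
  rw [hL] at hsum
  linarith

lemma classical_F_le_one (hp : ∀ x, 0 ≤ p x) (hq : ∀ x, 0 ≤ q x)
    (hp1 : ∑ x, p x = 1) (hq1 : ∑ x, q x = 1) :
    (∑ x, Real.sqrt (p x * q x)) ^ 2 ≤ 1 := by
  have := Finset.sum_mul_sq_le_sq_mul_sq Finset.univ (fun x => Real.sqrt (p x)) (fun x => Real.sqrt (q x))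
  calc (∑ x, Real.sqrt (p x * q x)) ^ 2
      = (∑ x, Real.sqrt (p x) * Real.sqrt (q x)) ^ 2 := by
        congr 1; exact Finset.sum_congr rfl fun x _ => Real.sqrt_mul (hp x) _
    _ ≤ (∑ x, Real.sqrt (p x) ^ 2) * ∑ x, Real.sqrt (q x) ^ 2 := this
    _ = 1 := by
        rw [Finset.sum_congr rfl fun x _ => Real.sq_sqrt (hp x),
          Finset.sum_congr rfl fun x _ => Real.sq_sqrt (hq x), hp1, hq1, mul_one]

lemma classical_upper (hp : ∀ x, 0 ≤ p x) (hq : ∀ x, 0 ≤ q x)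
    (hp1 : ∑ x, p x = 1) (hq1 : ∑ x, q x = 1) :
    (∑ x, |p x - q x|) / 2 ≤ Real.sqrt (1 - (∑ x, Real.sqrt (p x * q x)) ^ 2) := by
  set F := ∑ x, Real.sqrt (p x * q x) with hF
  have habs : ∀ x, |p x - q x| = |Real.sqrt (p x) - Real.sqrt (q x)| * (Real.sqrt (p x) + Real.sqrt (q x)) := by
    intro x
    rw [abs_eq_sq_diff _ _ (Real.sqrt_nonneg _) (Real.sqrt_nonneg _),
      Real.sq_sqrt (hp x), Real.sq_sqrt (hq x)]
  have hCS := Finset.sum_mul_sq_le_sq_mul_sq Finset.univ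
    (fun x => |Real.sqrt (p x) - Real.sqrt (q x)|) (fun x => Real.sqrt (p x) + Real.sqrt (q x))
  have e1 : ∑ x, |Real.sqrt (p x) - Real.sqrt (q x)| ^ 2 = 2 - 2 * F := by
    have hx : ∀ x : Fin m, |Real.sqrt (p x) - Real.sqrt (q x)| ^ 2
        = p x + q x - 2 * Real.sqrt (p x * q x) := by
      intro x
      rw [sq_abs, Real.sqrt_mul (hp x)]
      nlinarith [Real.sq_sqrt (hp x), Real.sq_sqrt (hq x)]
    rw [Finset.sum_congr rfl fun x _ => hx x, Finset.sum_sub_distrib, Finset.sum_add_distrib,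
      hp1, hq1, ← Finset.mul_sum, ← hF]
    ring
  have e2 : ∑ x, (Real.sqrt (p x) + Real.sqrt (q x)) ^ 2 = 2 + 2 * F := by
    have hx : ∀ x : Fin m, (Real.sqrt (p x) + Real.sqrt (q x)) ^ 2
        = p x + q x + 2 * Real.sqrt (p x * q x) := by
      intro x
      rw [Real.sqrt_mul (hp x)]
      nlinarith [Real.sq_sqrt (hp x), Real.sq_sqrt (hq x)]
    rw [Finset.sum_congr rfl fun x _ => hx x, Finset.sum_add_distrib, Finset.sum_add_distrib,
      hp1, hq1, ← Finset.mul_sum, ← hF]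
    ring
  have hsum_eq : ∑ x, |p x - q x| = ∑ x, |Real.sqrt (p x) - Real.sqrt (q x)| * (Real.sqrt (p x) + Real.sqrt (q x)) :=
    Finset.sum_congr rfl fun x _ => habs x
  have hmain : (∑ x, |p x - q x|) ^ 2 ≤ 4 * (1 - F ^ 2) := by
    rw [hsum_eq]
    calc (∑ x, |Real.sqrt (p x) - Real.sqrt (q x)| * (Real.sqrt (p x) + Real.sqrt (q x))) ^ 2
        ≤ (∑ x, |Real.sqrt (p x) - Real.sqrt (q x)| ^ 2) * ∑ x, (Real.sqrt (p x) + Real.sqrt (q x)) ^ 2 := hCS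
      _ = (2 - 2 * F) * (2 + 2 * F) := by rw [e1, e2]
      _ = 4 * (1 - F ^ 2) := by ring
  have hnn : 0 ≤ ∑ x, |p x - q x| := Finset.sum_nonneg fun x _ => abs_nonneg _
  have hF1 : F ^ 2 ≤ 1 := classical_F_le_one hp hq hp1 hq1
  calc (∑ x, |p x - q x|) / 2
      = Real.sqrt (((∑ x, |p x - q x|) / 2) ^ 2) := (Real.sqrt_sq (by positivity)).symm
    _ ≤ Real.sqrt (1 - F ^ 2) := Real.sqrt_le_sqrt (by nlinarith)
end Classical
section LowerEst

lemma my_sum_mulVec {d m : ℕ} (f : Fin m → Matrix (Fin d) (Fin d) ℂ) (w : Fin d → ℂ) :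
    (∑ x, f x) *ᵥ w = ∑ x, (f x *ᵥ w) := by
  funext i
  simp only [Matrix.mulVec, dotProduct, Finset.sum_apply, Matrix.sum_apply,
    Finset.sum_mul]
  exact Finset.sum_comm

lemma my_dotProduct_sum {d m : ℕ} (u : Fin d → ℂ) (g : Fin m → Fin d → ℂ) :
    u ⬝ᵥ (∑ x, g x) = ∑ x, u ⬝ᵥ g x := by
  simp only [dotProduct, Finset.sum_apply, Finset.mul_sum]
  exact Finset.sum_comm

lemma term_nonneg {d : ℕ} {Rx : Matrix (Fin d) (Fin d) ℂ} (hR : Rx.PosSemidef)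
    {a b : ℝ} (ha : 0 ≤ a) (hb : 0 ≤ b) (u v : Fin d → ℂ) :
    0 ≤ (a : ℂ) * (star u ⬝ᵥ (Rx *ᵥ u)) + (Real.sqrt (a * b) : ℂ) * (star u ⬝ᵥ (Rx *ᵥ v)) +
      ((Real.sqrt (a * b) : ℂ) * (star v ⬝ᵥ (Rx *ᵥ u)) + (b : ℂ) * (star v ⬝ᵥ (Rx *ᵥ v))) := by
  set B := msqrt Rx with hB
  have hBH : B.IsHermitian := msqrt_isHermitian hR
  have hBB : B * B = Rx := msqrt_mul_self hR
  have key : ∀ w z : Fin d → ℂ, star w ⬝ᵥ (Rx *ᵥ z) = star (B *ᵥ w) ⬝ᵥ (B *ᵥ z) := by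
    intro w z
    rw [star_mulVec, hBH.eq, ← hBB, ← Matrix.mulVec_mulVec, Matrix.dotProduct_mulVec]
  set y := (Real.sqrt a : ℂ) • (B *ᵥ u) + (Real.sqrt b : ℂ) • (B *ᵥ v) with hy
  have hstar : ∀ r : ℝ, star ((r : ℝ) : ℂ) = ((r : ℝ) : ℂ) := fun r => by
    simp [Complex.star_def, Complex.conj_ofReal]
  have hrw : (a : ℂ) * (star (B *ᵥ u) ⬝ᵥ (B *ᵥ u)) +
      (Real.sqrt (a * b) : ℂ) * (star (B *ᵥ u) ⬝ᵥ (B *ᵥ v)) +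
      ((Real.sqrt (a * b) : ℂ) * (star (B *ᵥ v) ⬝ᵥ (B *ᵥ u)) +
        (b : ℂ) * (star (B *ᵥ v) ⬝ᵥ (B *ᵥ v))) = star y ⬝ᵥ y := by
    rw [hy]
    simp only [star_add, star_smul, hstar, add_dotProduct, dotProduct_add,
      smul_dotProduct, dotProduct_smul, smul_eq_mul]
    rw [show ((Real.sqrt (a * b) : ℝ) : ℂ) = (Real.sqrt a : ℂ) * (Real.sqrt b : ℂ) by
        rw [← Complex.ofReal_mul, Real.sqrt_mul ha],
      show ((a : ℝ) : ℂ) = (Real.sqrt a : ℂ) * (Real.sqrt a : ℂ) by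
        rw [← Complex.ofReal_mul, Real.mul_self_sqrt ha],
      show ((b : ℝ) : ℂ) = (Real.sqrt b : ℂ) * (Real.sqrt b : ℂ) by
        rw [← Complex.ofReal_mul, Real.mul_self_sqrt hb]]
    ring
  rw [key u u, key u v, key v u, key v v, hrw]
  exact dotProduct_star_self_nonneg y

lemma lower_est {d : ℕ} (ρ σ : Matrix (Fin d) (Fin d) ℂ)
    (hρ : ρ.PosDef) (hσ : σ.PosDef)
    {m : ℕ} (R : Fin m → Matrix (Fin d) (Fin d) ℂ) (p q : Fin m → ℝ)
    (hRT : IsReverseTest ρ σ R p q) :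
    ∑ x, Real.sqrt (p x * q x) ≤ ((gm ρ σ).trace).re := by
  set c : Fin m → ℝ := fun x => Real.sqrt (p x * q x) with hc
  set S : Matrix (Fin d) (Fin d) ℂ := ∑ x, ((c x : ℝ) : ℂ) • R x with hSdef
  have hSH : S.IsHermitian := by
    show Sᴴ = S
    rw [hSdef, Matrix.conjTranspose_sum]
    refine Finset.sum_congr rfl fun x _ => ?_
    rw [Matrix.conjTranspose_smul, (hRT.states x).1.1.eq]
    congr 1
    exact Complex.conj_ofReal _
  -- block matrix is PSD
  have hblock : (Matrix.fromBlocks ρ S S σ).PosSemidef := by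
    refine PosSemidef.of_dotProduct_mulVec_nonneg ?_ ?_
    · rw [Matrix.isHermitian_fromBlocks_iff]
      exact ⟨hρ.1, hSH.eq, hSH.eq, hσ.1⟩
    · intro x
      set u : Fin d → ℂ := x ∘ Sum.inl with hu
      set v : Fin d → ℂ := x ∘ Sum.inr with hv
      have hx : x = Sum.elim u v := by
        funext i; cases i <;> rfl
      have hstarx : star x = Sum.elim (star u) (star v) := by
        funext i; cases i <;> rfl
      have hmv : Matrix.fromBlocks ρ S S σ *ᵥ x
          = Sum.elim (ρ *ᵥ u + S *ᵥ v) (S *ᵥ u + σ *ᵥ v) := by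
        rw [hx, Matrix.fromBlocks_mulVec]
        simp
      rw [hmv, hstarx, sumElim_dotProduct_sumElim]
      rw [← hRT.rho_eq, ← hRT.sigma_eq, hSdef]
      rw [my_sum_mulVec, my_sum_mulVec, my_sum_mulVec, my_sum_mulVec,
        dotProduct_add, dotProduct_add,
        my_dotProduct_sum, my_dotProduct_sum, my_dotProduct_sum, my_dotProduct_sum,
        ← Finset.sum_add_distrib, ← Finset.sum_add_distrib, ← Finset.sum_add_distrib]
      refine Finset.sum_nonneg fun x _ => ?_
      simp only [Matrix.smul_mulVec, dotProduct_smul, smul_eq_mul]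
      exact term_nonneg (hRT.states x).1 (hRT.p_nonneg x) (hRT.q_nonneg x) u v
  -- Schur complement
  haveI : Invertible ρ := ρ.invertibleOfIsUnitDet hρ.det_pos.ne'.isUnit
  have hb2 : (Matrix.fromBlocks ρ S Sᴴ σ).PosSemidef := by rwa [hSH.eq]
  have hSchur : (σ - Sᴴ * ρ⁻¹ * S).PosSemidef := (Matrix.PosDef.fromBlocks₁₁ S σ hρ).mp hb2
  rw [hSH.eq] at hSchur
  -- conjugate by A⁻¹
  set A := msqrt ρ with hAdef
  have hA : A.PosDef := msqrt_posDef hρ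
  have hAH : A.IsHermitian := hA.1
  have hAA : A * A = ρ := msqrt_mul_self hρ.posSemidef
  have hAd : A.det ≠ 0 := hA.det_pos.ne'
  have h1 : A * A⁻¹ = 1 := Matrix.mul_nonsing_inv A hAd.isUnit
  have h2 : A⁻¹ * A = 1 := Matrix.nonsing_inv_mul A hAd.isUnit
  have hAiH : (A⁻¹).IsHermitian := by
    show (A⁻¹)ᴴ = A⁻¹
    rw [Matrix.conjTranspose_nonsing_inv, hAH.eq]
  have hAid : (A⁻¹).det ≠ 0 := by
    intro h0
    have := congrArg Matrix.det h2
    rw [Matrix.det_mul, h0, zero_mul, Matrix.det_one] at this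
    exact zero_ne_one this
  set C := A⁻¹ * σ * A⁻¹ with hCdef
  have hC : C.PosDef := posDef_conj hσ hAiH hAid
  set M := msqrt C with hMdef
  have hM : M.PosDef := msqrt_posDef hC
  have hMM : M * M = C := msqrt_mul_self hC.posSemidef
  set T := A⁻¹ * S * A⁻¹ with hTdef
  have hTH : T.IsHermitian := by
    show Tᴴ = T
    rw [hTdef, Matrix.conjTranspose_mul, Matrix.conjTranspose_mul, hAiH.eq, hSH.eq,
      Matrix.mul_assoc]
  have hconj : (A⁻¹ * (σ - S * ρ⁻¹ * S) * A⁻¹).PosSemidef := by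
    have := hSchur.conjTranspose_mul_mul_same A⁻¹
    rwa [hAiH.eq] at this
  have heq : A⁻¹ * (σ - S * ρ⁻¹ * S) * A⁻¹ = M * M - T * T := by
    rw [hMM, hCdef, hTdef, ← hAA, Matrix.mul_inv_rev]
    simp only [Matrix.mul_sub, Matrix.sub_mul, Matrix.mul_assoc]
  rw [heq] at hconj
  have hMT : (M - T).PosSemidef := sub_psd_of_sq_sub_psd hM hTH hconj
  have hfin : (A * (M - T) * A).PosSemidef := by
    have := hMT.conjTranspose_mul_mul_same A
    rwa [hAH.eq] at this
  have htr := psd_trace_re_nonneg hfin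
  have hgm : gm ρ σ = A * M * A := by
    rw [gm, ← hAdef, ← hCdef, ← hMdef]
  have hATA : A * T * A = S := by
    rw [hTdef, show A * (A⁻¹ * S * A⁻¹) * A = A * A⁻¹ * S * (A⁻¹ * A) by
      simp only [Matrix.mul_assoc], h1, h2, Matrix.one_mul, Matrix.mul_one]
  have hsplit : A * (M - T) * A = gm ρ σ - S := by
    rw [hgm, ← hATA, Matrix.mul_sub, Matrix.sub_mul]
  rw [hsplit, Matrix.trace_sub] at htr
  have htrS : S.trace = ((∑ x, c x : ℝ) : ℂ) := by
    rw [hSdef, Matrix.trace_sum]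
    rw [Complex.ofReal_sum]
    refine Finset.sum_congr rfl fun x _ => ?_
    rw [Matrix.trace_smul, (hRT.states x).2, smul_eq_mul, mul_one]
  rw [Complex.sub_re, htrS] at htr
  simpa using le_of_sub_nonneg htr
end LowerEst
section UpperTest

lemma upper_test {d : ℕ} (ρ σ : Matrix (Fin d) (Fin d) ℂ)
    (hρ : ρ.PosDef) (hσ : σ.PosDef) (hρ1 : ρ.trace = 1) (hσ1 : σ.trace = 1) :
    ∃ (R : Fin d → Matrix (Fin d) (Fin d) ℂ) (p q : Fin d → ℝ),
      IsReverseTest ρ σ R p q ∧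
        ∑ x, Real.sqrt (p x * q x) = ((gm ρ σ).trace).re := by
  set A := msqrt ρ with hAdef
  have hA : A.PosDef := msqrt_posDef hρ
  have hAH : A.IsHermitian := hA.1
  have hAA : A * A = ρ := msqrt_mul_self hρ.posSemidef
  have hAd : A.det ≠ 0 := hA.det_pos.ne'
  have h1 : A * A⁻¹ = 1 := Matrix.mul_nonsing_inv A hAd.isUnit
  have h2 : A⁻¹ * A = 1 := Matrix.nonsing_inv_mul A hAd.isUnit
  have hAiH : (A⁻¹).IsHermitian := by
    show (A⁻¹)ᴴ = A⁻¹
    rw [Matrix.conjTranspose_nonsing_inv, hAH.eq]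
  have hAid : (A⁻¹).det ≠ 0 := by
    intro h0
    have := congrArg Matrix.det h2
    rw [Matrix.det_mul, h0, zero_mul, Matrix.det_one] at this
    exact zero_ne_one this
  set C := A⁻¹ * σ * A⁻¹ with hCdef
  have hC : C.PosDef := posDef_conj hσ hAiH hAid
  set M := msqrt C with hMdef
  have hM : M.PosDef := msqrt_posDef hC
  have hMM : M * M = C := msqrt_mul_self hC.posSemidef
  have hMH : M.IsHermitian := hM.1
  set U : Matrix (Fin d) (Fin d) ℂ := (hMH.eigenvectorUnitary : Matrix (Fin d) (Fin d) ℂ)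
    with hUdef
  have hUmem := hMH.eigenvectorUnitary.2
  rw [Matrix.mem_unitaryGroup_iff] at hUmem
  have hU2 : U * Uᴴ = 1 := by rwa [← Matrix.star_eq_conjTranspose]
  have hU1 : Uᴴ * U = 1 := by
    have := hMH.eigenvectorUnitary.2
    rw [Matrix.mem_unitaryGroup_iff'] at this
    rwa [← Matrix.star_eq_conjTranspose]
  set lam : Fin d → ℝ := hMH.eigenvalues with hlamdef
  have hlam : ∀ i, 0 ≤ lam i := fun i => hM.posSemidef.eigenvalues_nonneg i
  have hspec : M = U * Matrix.diagonal (fun i => (lam i : ℂ)) * Uᴴ := by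
    have := hMH.spectral_theorem
    rw [Unitary.conjStarAlgAut_apply] at this
    rwa [← Matrix.star_eq_conjTranspose]
  set V := A * U with hVdef
  have hVH : Vᴴ = Uᴴ * A := by
    rw [hVdef, Matrix.conjTranspose_mul, hAH.eq]
  have hVdet : V.det ≠ 0 := by
    have hUd : U.det ≠ 0 := by
      intro h0
      have := congrArg Matrix.det hU2
      rw [Matrix.det_mul, h0, zero_mul, Matrix.det_one] at this
      exact zero_ne_one this
    rw [hVdef, Matrix.det_mul]
    exact mul_ne_zero hAd hUd
  set outer : Fin d → Matrix (Fin d) (Fin d) ℂ :=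
    fun i => Matrix.of fun j k => V j i * star (V k i) with houterdef
  have decomp : ∀ c : Fin d → ℂ,
      V * Matrix.diagonal c * Vᴴ = ∑ i, c i • outer i := by
    intro c
    ext j k
    simp only [Matrix.mul_apply, Matrix.diagonal_apply, Matrix.conjTranspose_apply,
      Matrix.sum_apply, Matrix.smul_apply, Matrix.of_apply, smul_eq_mul, houterdef,
      ite_mul, zero_mul, mul_ite, mul_zero, Finset.sum_ite_eq, Finset.sum_ite_eq',
      Finset.mem_univ, if_true]
    exact Finset.sum_congr rfl fun l _ => by ring
  have hρV : V * Vᴴ = ρ := by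
    rw [hVdef, Matrix.conjTranspose_mul, hAH.eq,
      show A * U * (Uᴴ * A) = A * (U * Uᴴ) * A by simp only [Matrix.mul_assoc], hU2,
      Matrix.mul_one, hAA]
  have hMsq : M * M = U * Matrix.diagonal (fun i => ((lam i : ℂ) * (lam i : ℂ))) * Uᴴ := by
    rw [hspec, show U * Matrix.diagonal (fun i => (lam i : ℂ)) * Uᴴ *
        (U * Matrix.diagonal (fun i => (lam i : ℂ)) * Uᴴ)
      = U * (Matrix.diagonal (fun i => (lam i : ℂ)) * (Uᴴ * U) *
          Matrix.diagonal (fun i => (lam i : ℂ))) * Uᴴ by simp only [Matrix.mul_assoc], hU1,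
      Matrix.mul_one, Matrix.diagonal_mul_diagonal]
  have hσV : V * Matrix.diagonal (fun i => ((lam i : ℂ) * (lam i : ℂ))) * Vᴴ = σ := by
    rw [hVdef, Matrix.conjTranspose_mul, hAH.eq,
      show A * U * Matrix.diagonal (fun i => ((lam i : ℂ) * (lam i : ℂ))) * (Uᴴ * A)
        = A * (U * Matrix.diagonal (fun i => ((lam i : ℂ) * (lam i : ℂ))) * Uᴴ) * A by
          simp only [Matrix.mul_assoc],
      ← hMsq, hMM, hCdef,
      show A * (A⁻¹ * σ * A⁻¹) * A = A * A⁻¹ * σ * (A⁻¹ * A) by simp only [Matrix.mul_assoc],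
      h1, h2, Matrix.one_mul, Matrix.mul_one]
  have hgmV : gm ρ σ = V * Matrix.diagonal (fun i => (lam i : ℂ)) * Vᴴ := by
    rw [gm, ← hAdef, ← hCdef, ← hMdef, hspec, hVdef, Matrix.conjTranspose_mul, hAH.eq]
    simp only [Matrix.mul_assoc]
  set pf : Fin d → ℝ := fun i => ∑ j, Complex.normSq (V j i) with hpfdef
  have houter_tr : ∀ i, (outer i).trace = ((pf i : ℝ) : ℂ) := by
    intro i
    simp only [Matrix.trace, Matrix.diag, houterdef, Matrix.of_apply, hpfdef,
      Complex.star_def, Complex.mul_conj, Complex.ofReal_sum]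
  have hpnn : ∀ i, 0 ≤ pf i := fun i => Finset.sum_nonneg fun j _ => Complex.normSq_nonneg _
  have hppos : ∀ i, 0 < pf i := by
    intro i
    rcases (hpnn i).lt_or_eq with h | h
    · exact h
    · exfalso
      have hall : ∀ j, Complex.normSq (V j i) = 0 := by
        intro j
        have := (Finset.sum_eq_zero_iff_of_nonneg
          (fun j _ => Complex.normSq_nonneg (V j i))).mp h.symm
        exact this j (Finset.mem_univ j)
      have hcol : V *ᵥ Pi.single i 1 = 0 := by
        funext j
        simp only [Matrix.mulVec_single_one, Matrix.col_apply, Pi.zero_apply]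
        exact Complex.normSq_eq_zero.mp (hall j)
      haveI : Invertible V := V.invertibleOfIsUnitDet hVdet.isUnit
      have := V.mulVec_injective_of_invertible (hcol.trans (V.mulVec_zero).symm)
      have h1' := congrFun this i
      simp [Pi.single_apply] at h1'
  set qf : Fin d → ℝ := fun i => lam i ^ 2 * pf i with hqfdef
  set Rf : Fin d → Matrix (Fin d) (Fin d) ℂ :=
    fun i => (((pf i)⁻¹ : ℝ) : ℂ) • outer i with hRfdef
  have houterH : ∀ i, (outer i).IsHermitian := by
    intro i
    show (outer i)ᴴ = outer i
    ext j k
    simp only [Matrix.conjTranspose_apply, houterdef, Matrix.of_apply, star_mul', star_star]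
    ring
  have houterPSD : ∀ i, (outer i).PosSemidef := by
    intro i
    refine PosSemidef.of_dotProduct_mulVec_nonneg (houterH i) fun x => ?_
    set z := (fun k => star (V k i)) ⬝ᵥ x with hzdef
    have hmv : outer i *ᵥ x = fun j => V j i * z := by
      funext j
      rw [hzdef]
      simp only [Matrix.mulVec, dotProduct, houterdef, Matrix.of_apply, Finset.mul_sum]
      exact Finset.sum_congr rfl fun k _ => by ring
    rw [hmv]
    have e : star x ⬝ᵥ (fun j => V j i * z) = star z * z := by
      rw [dotProduct]
      simp only [Pi.star_apply]
      rw [show ∑ j, star (x j) * (V j i * z) = (∑ j, star (x j) * V j i) * z by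
        rw [Finset.sum_mul]; exact Finset.sum_congr rfl fun j _ => by ring]
      congr 1
      rw [hzdef, dotProduct, star_sum]
      exact Finset.sum_congr rfl fun k _ => by
        simp [star_mul', star_star, mul_comm]
    rw [e]
    exact star_mul_self_nonneg z
  have hRPSD : ∀ i, (Rf i).PosSemidef := by
    intro i
    refine PosSemidef.of_dotProduct_mulVec_nonneg ?_ fun x => ?_
    · show (Rf i)ᴴ = Rf i
      rw [hRfdef]
      simp only [Matrix.conjTranspose_smul, Complex.star_def, Complex.conj_ofReal,
        (houterH i).eq]
    · rw [hRfdef]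
      simp only [Matrix.smul_mulVec, dotProduct_smul, smul_eq_mul]
      refine mul_nonneg ?_ ((houterPSD i).dotProduct_mulVec_nonneg x)
      rw [Complex.le_def]
      simp [inv_nonneg.mpr (hpnn i)]
  have hRtr : ∀ i, (Rf i).trace = 1 := by
    intro i
    rw [hRfdef]
    simp only [Matrix.trace_smul, houter_tr i, smul_eq_mul, ← Complex.ofReal_mul]
    rw [inv_mul_cancel₀ (hppos i).ne', Complex.ofReal_one]
  -- traces of ρ, σ, gm
  have htrρ : ((∑ i, pf i : ℝ) : ℂ) = 1 := by
    rw [← hρ1, ← hρV, show V * Vᴴ = V * Matrix.diagonal (fun _ : Fin d => (1:ℂ)) * Vᴴ by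
        rw [Matrix.diagonal_one, Matrix.mul_one], decomp, Matrix.trace_sum]
    rw [Complex.ofReal_sum]
    exact Finset.sum_congr rfl fun i _ => by
      rw [Matrix.trace_smul, houter_tr i, one_smul]
  have htrσ : ((∑ i, qf i : ℝ) : ℂ) = 1 := by
    rw [← hσ1, ← hσV, decomp, Matrix.trace_sum, Complex.ofReal_sum]
    refine Finset.sum_congr rfl fun i _ => ?_
    rw [Matrix.trace_smul, houter_tr i, smul_eq_mul, hqfdef, ← Complex.ofReal_mul]
    norm_cast
    ring
  have htrgm : (gm ρ σ).trace = ((∑ i, lam i * pf i : ℝ) : ℂ) := by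
    rw [hgmV, decomp, Matrix.trace_sum, Complex.ofReal_sum]
    refine Finset.sum_congr rfl fun i _ => ?_
    rw [Matrix.trace_smul, houter_tr i, smul_eq_mul, ← Complex.ofReal_mul]
  refine ⟨Rf, pf, qf, ⟨fun i => ⟨hRPSD i, hRtr i⟩, fun i => (hpnn i),
    fun i => mul_nonneg (sq_nonneg _) (hpnn i), ?_, ?_, ?_, ?_⟩, ?_⟩
  · exact_mod_cast htrρ
  · exact_mod_cast htrσ
  · -- ∑ pf i • Rf i = ρ
    rw [← hρV, show V * Vᴴ = V * Matrix.diagonal (fun _ : Fin d => (1:ℂ)) * Vᴴ by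
        rw [Matrix.diagonal_one, Matrix.mul_one], decomp]
    refine Finset.sum_congr rfl fun i _ => ?_
    rw [hRfdef, smul_smul, ← Complex.ofReal_mul, mul_inv_cancel₀ (hppos i).ne',
      Complex.ofReal_one, one_smul]
  · -- ∑ qf i • Rf i = σ
    rw [← hσV, decomp]
    refine Finset.sum_congr rfl fun i _ => ?_
    rw [hRfdef, smul_smul, ← Complex.ofReal_mul, hqfdef]
    congr 1
    rw [show lam i ^ 2 * pf i * (pf i)⁻¹ = lam i * lam i by
      field_simp [(hppos i).ne']]
    push_cast
    ring
  · -- F sum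
    rw [htrgm, Complex.ofReal_re]
    refine Finset.sum_congr rfl fun i _ => ?_
    rw [hqfdef, show pf i * (lam i ^ 2 * pf i) = (lam i * pf i) ^ 2 by ring,
      Real.sqrt_sq (mul_nonneg (hlam i) (hpnn i))]
end UpperTest
theorem stmt16 {d : ℕ} (ρ σ : Matrix (Fin d) (Fin d) ℂ)
    (hρ : ρ.PosDef) (hσ : σ.PosDef) (hρ1 : ρ.trace = 1) (hσ1 : σ.trace = 1) :
    1 - ((gm ρ σ).trace).re ≤ Dmax ρ σ ∧
      Dmax ρ σ ≤ Real.sqrt (1 - (((gm ρ σ).trace).re) ^ 2) := by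
  obtain ⟨R0, p0, q0, hRT0, hF0⟩ := upper_test ρ σ hρ hσ hρ1 hσ1
  have hmem : ((∑ x, |p0 x - q0 x|) / 2) ∈
      {r : ℝ | ∃ (m : ℕ) (R : Fin m → Matrix (Fin d) (Fin d) ℂ) (p q : Fin m → ℝ),
        IsReverseTest ρ σ R p q ∧ r = (∑ x, |p x - q x|) / 2} :=
    ⟨d, R0, p0, q0, hRT0, rfl⟩
  have hbdd : BddBelow {r : ℝ | ∃ (m : ℕ) (R : Fin m → Matrix (Fin d) (Fin d) ℂ)
      (p q : Fin m → ℝ), IsReverseTest ρ σ R p q ∧ r = (∑ x, |p x - q x|) / 2} := by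
    refine ⟨0, fun r hr => ?_⟩
    obtain ⟨m, R, p, q, hRT, rfl⟩ := hr
    positivity
  constructor
  · rw [Dmax]
    apply le_csInf ⟨_, hmem⟩
    rintro r ⟨m, R, p, q, hRT, rfl⟩
    have hF := lower_est ρ σ hρ hσ R p q hRT
    have hcl := classical_lower hRT.p_nonneg hRT.q_nonneg hRT.p_sum hRT.q_sum
    linarith
  · have hle : Dmax ρ σ ≤ (∑ x, |p0 x - q0 x|) / 2 := by
      rw [Dmax]; exact csInf_le hbdd hmem
    have hub := classical_upper hRT0.p_nonneg hRT0.q_nonneg hRT0.p_sum hRT0.q_sum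
    rw [hF0] at hub
    linarith
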